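/- Let R > 0, let μ be a probability measure on ℝ supported in [−R, R], let δ > 0, and let p_δ be the density of μ * γ_δ. Then ∫_{−R}^{R} (1/p_δ(t)) dt ≤ 8√(2π) · (δ^{3/2} R / (4R² + δ)) · exp(2R²/δ). -/

import Mathlib

open MeasureTheory Real

/-- Density of the convolution μ * γ_δ on ℝ:
p_δ(t) = ∫ (2πδ)^{-1/2} exp(−(t−s)²/(2δ)) dμ(s). -/
noncomputable def pdelta (δ : ℝ) (μ : Measure ℝ) (t : ℝ) : ℝ :=
  ∫ s, (Real.sqrt (2 * π * δ))⁻¹ * Real.exp (-((t - s) ^ 2) / (2 * δ)) ∂μ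

lemma gderiv (δ : ℝ) (hδ : 0 < δ) (u : ℝ) :
    HasDerivAt (fun u : ℝ => δ * u / (u ^ 2 + δ) * Real.exp (u ^ 2 / (2 * δ)))
      (Real.exp (u ^ 2 / (2 * δ)) * (u ^ 4 + δ ^ 2) / (u ^ 2 + δ) ^ 2) u := by
  have hne : u ^ 2 + δ ≠ 0 := by positivity
  have h1 : HasDerivAt (fun u : ℝ => δ * u) δ u := by
    simpa using (hasDerivAt_id u).const_mul δ
  have h2 : HasDerivAt (fun u : ℝ => u ^ 2 + δ) (2 * u) u := by
    simpa using (hasDerivAt_pow 2 u).add_const δ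
  have h3 := h1.div h2 hne
  have h4 : HasDerivAt (fun u : ℝ => u ^ 2 / (2 * δ)) (u / δ) u := by
    have := (hasDerivAt_pow 2 u).div_const (2 * δ)
    refine this.congr_deriv ?_
    field_simp
    ring
  have h5 := h4.exp
  have h6 := h3.mul h5
  refine h6.congr_deriv ?_
  simp only [Pi.div_apply]
  field_simp
  ring

theorem stmt12 (R δ : ℝ) (hR : 0 < R) (hδ : 0 < δ)
    (μ : Measure ℝ) [IsProbabilityMeasure μ] (hsupp : μ (Set.Icc (-R) R)ᶜ = 0) :
    ∫ t in Set.Icc (-R) R, (pdelta δ μ t)⁻¹ ≤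
      8 * Real.sqrt (2 * π) * (δ ^ ((3 : ℝ) / 2) * R / (4 * R ^ 2 + δ)) *
        Real.exp (2 * R ^ 2 / δ) := by
  have hπ : 0 < 2 * π * δ := by positivity
  have hs2 : 0 < Real.sqrt (2 * π * δ) := Real.sqrt_pos.2 hπ
  set g' : ℝ → ℝ := fun u => Real.exp (u ^ 2 / (2 * δ)) * (u ^ 4 + δ ^ 2) / (u ^ 2 + δ) ^ 2
    with hg'def
  set g : ℝ → ℝ := fun u => δ * u / (u ^ 2 + δ) * Real.exp (u ^ 2 / (2 * δ)) with hgdef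
  have hg'nonneg : ∀ u, 0 ≤ g' u := by
    intro u
    simp only [hg'def]
    positivity
  have hg'cont : Continuous g' := by
    apply Continuous.div (by fun_prop) (by fun_prop)
    intro x
    positivity
  -- exp(u²/(2δ)) ≤ 2 g'(u)
  have hkey : ∀ u : ℝ, Real.exp (u ^ 2 / (2 * δ)) ≤ 2 * g' u := by
    intro u
    have hb : (0:ℝ) < (u ^ 2 + δ) ^ 2 := by positivity
    have h2 : (u ^ 2 + δ) ^ 2 ≤ 2 * (u ^ 4 + δ ^ 2) := by nlinarith [sq_nonneg (u ^ 2 - δ)]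
    have : 2 * g' u = Real.exp (u ^ 2 / (2 * δ)) * (2 * (u ^ 4 + δ ^ 2) / (u ^ 2 + δ) ^ 2) := by
      simp only [hg'def]; ring
    rw [this]
    nth_rewrite 1 [show Real.exp (u ^ 2 / (2 * δ)) = Real.exp (u ^ 2 / (2 * δ)) * 1 by ring]
    apply mul_le_mul_of_nonneg_left _ (Real.exp_pos _).le
    rw [le_div_iff₀ hb]
    linarith
  -- derivative of F t = 2 g (t+R) - 2 g (R-t)
  have hF : ∀ t : ℝ, HasDerivAt (fun t => 2 * g (t + R) - 2 * g (R - t))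
      (2 * g' (t + R) + 2 * g' (R - t)) t := by
    intro t
    have h1 := (gderiv δ hδ (t + R)).comp t ((hasDerivAt_id t).add_const R)
    have h2 := (gderiv δ hδ (R - t)).comp t ((hasDerivAt_id t).neg.const_add R)
    have h3 := (h1.const_mul 2).sub (h2.const_mul 2)
    refine h3.congr_deriv ?_
    simp only [Function.comp, hg'def]
    ring
  -- a.e. support
  have hae : ∀ᵐ s ∂μ, s ∈ Set.Icc (-R) R := by
    rw [ae_iff]
    exact hsupp
  -- pointwise bound on the inverse density
  have hpt : ∀ t ∈ Set.Icc (-R) R,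
      (pdelta δ μ t)⁻¹ ≤ Real.sqrt (2 * π * δ) * (2 * g' (t + R) + 2 * g' (R - t)) := by
    intro t _
    set c : ℝ := (Real.sqrt (2 * π * δ))⁻¹ * Real.exp (-((|t| + R) ^ 2) / (2 * δ)) with hcdef
    have hc : 0 < c := by positivity
    have hfint : Integrable (fun s => (Real.sqrt (2 * π * δ))⁻¹ *
        Real.exp (-((t - s) ^ 2) / (2 * δ))) μ := by
      apply Integrable.mono' (integrable_const ((Real.sqrt (2 * π * δ))⁻¹))
        (Continuous.aestronglyMeasurable (by fun_prop))
      filter_upwards with s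
      rw [Real.norm_eq_abs, abs_of_nonneg (by positivity)]
      have he : Real.exp (-((t - s) ^ 2) / (2 * δ)) ≤ 1 := by
        rw [Real.exp_le_one_iff]
        apply div_nonpos_of_nonpos_of_nonneg (neg_nonpos.2 (sq_nonneg _)) (by positivity)
      calc (Real.sqrt (2 * π * δ))⁻¹ * Real.exp (-((t - s) ^ 2) / (2 * δ))
          ≤ (Real.sqrt (2 * π * δ))⁻¹ * 1 := by
            apply mul_le_mul_of_nonneg_left he (by positivity)
        _ = (Real.sqrt (2 * π * δ))⁻¹ := by ring
    have hlow : c ≤ pdelta δ μ t := by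
      have hmono : ∀ᵐ s ∂μ, c ≤ (Real.sqrt (2 * π * δ))⁻¹ *
          Real.exp (-((t - s) ^ 2) / (2 * δ)) := by
        filter_upwards [hae] with s hs
        have h1 : (t - s) ^ 2 ≤ (|t| + R) ^ 2 := by
          nlinarith [sq_abs t, mul_nonneg (sub_nonneg.2 (le_abs_self t))
              (sub_nonneg.2 hs.2),
            mul_nonneg (by linarith [neg_abs_le t] : (0:ℝ) ≤ |t| + t)
              (by linarith [hs.1] : (0:ℝ) ≤ s + R),
            mul_nonneg (sub_nonneg.2 hs.2) (by linarith [hs.1] : (0:ℝ) ≤ R + s)]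
        have h2 : -((|t| + R) ^ 2) / (2 * δ) ≤ -((t - s) ^ 2) / (2 * δ) := by
          apply div_le_div_of_nonneg_right ?_ (by positivity)
          · linarith
        exact mul_le_mul_of_nonneg_left (Real.exp_le_exp.2 h2) (by positivity)
      have := integral_mono_ae (integrable_const c) hfint hmono
      simpa [pdelta] using this
    have hinv : (pdelta δ μ t)⁻¹ ≤ c⁻¹ := by
      apply inv_anti₀ hc hlow
    have hcid : c⁻¹ = Real.sqrt (2 * π * δ) * Real.exp ((|t| + R) ^ 2 / (2 * δ)) := by
      rw [hcdef, mul_inv, inv_inv, ← Real.exp_neg, neg_div, neg_neg]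
    rw [hcid] at hinv
    refine hinv.trans ?_
    apply mul_le_mul_of_nonneg_left ?_ hs2.le
    rcases le_or_gt 0 t with ht | ht
    · have h1 : Real.exp ((|t| + R) ^ 2 / (2 * δ)) ≤ 2 * g' (t + R) := by
        rw [abs_of_nonneg ht]; exact hkey (t + R)
      have h2 : 0 ≤ 2 * g' (R - t) := by linarith [hg'nonneg (R - t)]
      linarith
    · have h1 : Real.exp ((|t| + R) ^ 2 / (2 * δ)) ≤ 2 * g' (R - t) := by
        rw [abs_of_neg ht]
        have := hkey (R - t)
        convert this using 3
        ring
      have h2 : 0 ≤ 2 * g' (t + R) := by linarith [hg'nonneg (t + R)]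
      linarith
  -- integrability of the majorant
  have hφcont : Continuous (fun t => Real.sqrt (2 * π * δ) * (2 * g' (t + R) + 2 * g' (R - t))) := by
    apply Continuous.mul continuous_const
    apply Continuous.add
    · exact continuous_const.mul (hg'cont.comp (continuous_id.add continuous_const))
    · exact continuous_const.mul (hg'cont.comp (continuous_const.sub continuous_id))
  have hφint : IntegrableOn (fun t => Real.sqrt (2 * π * δ) * (2 * g' (t + R) + 2 * g' (R - t)))
      (Set.Icc (-R) R) := hφcont.integrableOn_Icc
  -- compare integrals
  have hmain : ∫ t in Set.Icc (-R) R, (pdelta δ μ t)⁻¹ ≤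
      ∫ t in Set.Icc (-R) R, Real.sqrt (2 * π * δ) * (2 * g' (t + R) + 2 * g' (R - t)) := by
    apply integral_mono_of_nonneg
    · filter_upwards with t
      have : 0 ≤ pdelta δ μ t := by
        apply integral_nonneg
        intro s
        positivity
      positivity
    · exact hφint
    · exact (ae_restrict_iff' measurableSet_Icc).2 (ae_of_all _ hpt)
  refine hmain.trans_eq ?_
  -- compute the integral via FTC
  have hle : (-R : ℝ) ≤ R := by linarith
  have hFTC : ∫ t in (-R)..R, (2 * g' (t + R) + 2 * g' (R - t)) =
      (fun t => 2 * g (t + R) - 2 * g (R - t)) R -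
      (fun t => 2 * g (t + R) - 2 * g (R - t)) (-R) := by
    apply intervalIntegral.integral_eq_sub_of_hasDerivAt (fun t _ => hF t)
    apply Continuous.intervalIntegrable
    apply Continuous.add
    · exact continuous_const.mul (hg'cont.comp (continuous_id.add continuous_const))
    · exact continuous_const.mul (hg'cont.comp (continuous_const.sub continuous_id))
  have hg0 : g 0 = 0 := by simp [hgdef]
  have hval : ∫ t in (-R)..R, (2 * g' (t + R) + 2 * g' (R - t)) = 4 * g (R + R) := by
    rw [hFTC]
    simp only [neg_add_cancel, sub_neg_eq_add, sub_self]
    rw [hg0]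
    ring
  calc ∫ t in Set.Icc (-R) R, Real.sqrt (2 * π * δ) * (2 * g' (t + R) + 2 * g' (R - t))
      = ∫ t in (-R)..R, Real.sqrt (2 * π * δ) * (2 * g' (t + R) + 2 * g' (R - t)) := by
        rw [intervalIntegral.integral_of_le hle, integral_Icc_eq_integral_Ioc]
    _ = Real.sqrt (2 * π * δ) * ∫ t in (-R)..R, (2 * g' (t + R) + 2 * g' (R - t)) := by
        rw [intervalIntegral.integral_const_mul]
    _ = Real.sqrt (2 * π * δ) * (4 * g (R + R)) := by rw [hval]
    _ = 8 * Real.sqrt (2 * π) * (δ ^ ((3 : ℝ) / 2) * R / (4 * R ^ 2 + δ)) *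
        Real.exp (2 * R ^ 2 / δ) := by
        have hrpow : δ ^ ((3 : ℝ) / 2) = δ * Real.sqrt δ := by
          rw [show (3:ℝ)/2 = 1 + 1/2 by norm_num, Real.rpow_add hδ, Real.rpow_one,
            Real.sqrt_eq_rpow]
        have hsq : Real.sqrt (2 * π * δ) = Real.sqrt (2 * π) * Real.sqrt δ := by
          rw [Real.sqrt_mul (by positivity)]
        have hexp : Real.exp ((R + R) ^ 2 / (2 * δ)) = Real.exp (2 * R ^ 2 / δ) := by
          congr 1
          field_simp
          ring
        simp only [hgdef]
        rw [hsq, hrpow, hexp]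
        have hne : (R + R) ^ 2 + δ ≠ 0 := by positivity
        have hne2 : 4 * R ^ 2 + δ ≠ 0 := by positivity
        field_simp
        ring
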